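/- The multi-edge hidden time-reversal generator is a Markov jump-process generator (Theorem 'unitary2'): the matrix W̃ := P * (M Q)ᵀ * P⁻¹ has nonnegative off-diagonal entries and every column of W̃ sums to zero (i.e. W̃ is a MJPG); moreover W̃ = W_mar + P * (W_hid)ᵀ * P⁻¹. -/

import Mathlib

open Matrix

/-- The multi-edge hidden time-reversal generator is a Markov jump-process generator
(Theorem "unitary2"), and it decomposes as the marginal generator plus the
time reversal of the hidden generator. -/
theorem multi_edge_hidden_TR_is_MJPG {n m : ℕ}
    (W Whid : Matrix (Fin n) (Fin n) ℝ)
    (hW1 : ∀ i j, i ≠ j → 0 ≤ W i j)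
    (hW2 : ∀ j, ∑ i, W i j = 0)
    (ei ej : Fin m → Fin n)
    (hij : ∀ μ, ei μ ≠ ej μ)
    (hdist : ∀ μ ν, μ ≠ ν → ({ei μ, ej μ} : Finset (Fin n)) ≠ {ei ν, ej ν})
    (hpos1 : ∀ μ, 0 < W (ei μ) (ej μ))
    (hpos2 : ∀ μ, 0 < W (ej μ) (ei μ))
    (hH1 : ∀ μ, Whid (ei μ) (ej μ) = 0)
    (hH2 : ∀ μ, Whid (ej μ) (ei μ) = 0)
    (hH3 : ∀ i, Whid i i = W i i
        + ∑ μ ∈ Finset.univ.filter (fun μ => ej μ = i), W (ei μ) (ej μ)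
        + ∑ μ ∈ Finset.univ.filter (fun μ => ei μ = i), W (ej μ) (ei μ))
    (hH4 : ∀ i j, i ≠ j →
      (∀ μ, ¬(i = ei μ ∧ j = ej μ) ∧ ¬(i = ej μ ∧ j = ei μ)) → Whid i j = W i j)
    (p : Fin n → ℝ) (hp1 : ∀ i, 0 < p i) (hp2 : ∑ i, p i = 1)
    (hp3 : Whid *ᵥ p = 0)
    (Q : Fin m → ℝ)
    (hQ : ∀ μ, Q μ = Real.log (W (ei μ) (ej μ) * p (ej μ) / (W (ej μ) (ei μ) * p (ei μ))))
    (M : (Fin m → ℝ) → Matrix (Fin n) (Fin n) ℝ)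
    (hM1 : ∀ q μ, M q (ei μ) (ej μ) = W (ei μ) (ej μ) * Real.exp (-q μ))
    (hM2 : ∀ q μ, M q (ej μ) (ei μ) = W (ej μ) (ei μ) * Real.exp (q μ))
    (hM3 : ∀ q i j, (∀ μ, ¬(i = ei μ ∧ j = ej μ) ∧ ¬(i = ej μ ∧ j = ei μ)) → M q i j = W i j) :
    (∀ i j, i ≠ j →
      0 ≤ (Matrix.diagonal p * (M Q)ᵀ * (Matrix.diagonal p)⁻¹) i j) ∧
    (∀ j, ∑ i, (Matrix.diagonal p * (M Q)ᵀ * (Matrix.diagonal p)⁻¹) i j = 0) ∧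
    Matrix.diagonal p * (M Q)ᵀ * (Matrix.diagonal p)⁻¹
      = (W - Whid) + Matrix.diagonal p * Whidᵀ * (Matrix.diagonal p)⁻¹ := by
  have hpne : ∀ i, p i ≠ 0 := fun i => (hp1 i).ne'
  have hinv : (Matrix.diagonal p)⁻¹ = Matrix.diagonal (fun i => (p i)⁻¹) := by
    apply Matrix.inv_eq_right_inv
    rw [Matrix.diagonal_mul_diagonal]
    simp [mul_inv_cancel₀, hpne]
  have hE : ∀ (A : Matrix (Fin n) (Fin n) ℝ) i j,
      (Matrix.diagonal p * Aᵀ * (Matrix.diagonal p)⁻¹) i j = p i * A j i * (p j)⁻¹ := by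
    intro A i j
    rw [hinv, Matrix.mul_diagonal, Matrix.diagonal_mul, Matrix.transpose_apply]
  have hxpos : ∀ ν, 0 < W (ei ν) (ej ν) * p (ej ν) := fun ν => mul_pos (hpos1 ν) (hp1 _)
  have hypos : ∀ ν, 0 < W (ej ν) (ei ν) * p (ei ν) := fun ν => mul_pos (hpos2 ν) (hp1 _)
  have hexpQ : ∀ ν, Real.exp (Q ν)
      = (W (ei ν) (ej ν) * p (ej ν)) / (W (ej ν) (ei ν) * p (ei ν)) := by
    intro ν
    rw [hQ, Real.exp_log (div_pos (hxpos ν) (hypos ν))]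
  have hexpQ' : ∀ ν, Real.exp (-Q ν)
      = (W (ej ν) (ei ν) * p (ei ν)) / (W (ei ν) (ej ν) * p (ej ν)) := by
    intro ν
    rw [Real.exp_neg, hexpQ, inv_div]
  -- the matrix equality (third goal), proved first
  have heq : Matrix.diagonal p * (M Q)ᵀ * (Matrix.diagonal p)⁻¹
      = (W - Whid) + Matrix.diagonal p * Whidᵀ * (Matrix.diagonal p)⁻¹ := by
    ext i j
    rw [hE, Matrix.add_apply, Matrix.sub_apply, hE]
    by_cases hd : i = j
    · subst hd
      have hMd : M Q i i = W i i := by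
        refine hM3 Q i i fun μ => ⟨fun h => hij μ (h.1.symm.trans h.2),
          fun h => hij μ (h.2.symm.trans h.1)⟩
      rw [hMd]
      field_simp [hpne i]
      ring
    · by_cases hA : ∃ ν, i = ei ν ∧ j = ej ν
      · obtain ⟨ν, h1, h2⟩ := hA
        subst h1; subst h2
        rw [hM2 Q ν, hH1 ν, hH2 ν, hexpQ]
        field_simp [hpne, (hpos1 ν).ne', (hpos2 ν).ne']
        ring
      · by_cases hB : ∃ ν, i = ej ν ∧ j = ei ν
        · obtain ⟨ν, h1, h2⟩ := hB
          subst h1; subst h2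
          rw [hM1 Q ν, hH1 ν, hH2 ν, hexpQ']
          field_simp [hpne, (hpos1 ν).ne', (hpos2 ν).ne']
          ring
        · push_neg at hA hB
          have hcond : ∀ μ, ¬(i = ei μ ∧ j = ej μ) ∧ ¬(i = ej μ ∧ j = ei μ) := by
            intro μ
            exact ⟨fun h => (hA μ h.1) h.2, fun h => (hB μ h.1) h.2⟩
          have hcond' : ∀ μ, ¬(j = ei μ ∧ i = ej μ) ∧ ¬(j = ej μ ∧ i = ei μ) := by
            intro μ
            exact ⟨fun h => (hB μ h.2) h.1, fun h => (hA μ h.2) h.1⟩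
          rw [hM3 Q j i hcond', hH4 i j hd hcond, hH4 j i (fun h => hd h.symm) hcond']
          ring
  -- nonnegativity (first goal)
  have hnonneg : ∀ i j, i ≠ j →
      0 ≤ (Matrix.diagonal p * (M Q)ᵀ * (Matrix.diagonal p)⁻¹) i j := by
    intro i j hd
    rw [hE]
    have hM : 0 ≤ M Q j i := by
      by_cases hA : ∃ ν, j = ei ν ∧ i = ej ν
      · obtain ⟨ν, h1, h2⟩ := hA
        subst h1; subst h2
        rw [hM1 Q ν]
        exact le_of_lt (mul_pos (hpos1 ν) (Real.exp_pos _))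
      · by_cases hB : ∃ ν, j = ej ν ∧ i = ei ν
        · obtain ⟨ν, h1, h2⟩ := hB
          subst h1; subst h2
          rw [hM2 Q ν]
          exact le_of_lt (mul_pos (hpos2 ν) (Real.exp_pos _))
        · push_neg at hA hB
          rw [hM3 Q j i (fun μ => ⟨fun h => (hA μ h.1) h.2, fun h => (hB μ h.1) h.2⟩)]
          exact hW1 j i fun h => hd h.symm
    have hpi := (hp1 i).le
    have hpj := (inv_nonneg.mpr (hp1 j).le)
    exact mul_nonneg (mul_nonneg hpi hM) hpj
  -- decomposition of W - Whid as a sum over edges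
  have hsplit : ∀ (f g h k : Fin m → ℝ), ∑ μ, (f μ + g μ - h μ - k μ)
      = ∑ μ, f μ + ∑ μ, g μ - ∑ μ, h μ - ∑ μ, k μ := by
    intro f g h k
    simp [Finset.sum_sub_distrib, Finset.sum_add_distrib]
  have hdecomp : ∀ i j, W i j - Whid i j = ∑ μ,
      ((if i = ei μ ∧ j = ej μ then W (ei μ) (ej μ) else 0)
      + (if i = ej μ ∧ j = ei μ then W (ej μ) (ei μ) else 0)
      - (if i = j ∧ j = ej μ then W (ei μ) (ej μ) else 0)
      - (if i = j ∧ j = ei μ then W (ej μ) (ei μ) else 0)) := by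
    intro i j
    by_cases hd : i = j
    · subst hd
      have h1 : ∀ μ, ¬(i = ei μ ∧ i = ej μ) := fun μ h => hij μ (h.1.symm.trans h.2)
      have h2 : ∀ μ, ¬(i = ej μ ∧ i = ei μ) := fun μ h => hij μ (h.2.symm.trans h.1)
      have e1 : ∑ μ, (if i = i ∧ i = ej μ then W (ei μ) (ej μ) else 0)
          = ∑ μ ∈ Finset.univ.filter (fun μ => ej μ = i), W (ei μ) (ej μ) := by
        rw [Finset.sum_filter]
        refine Finset.sum_congr rfl fun μ _ => ?_
        rcases eq_or_ne (ej μ) i with h | h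
        · simp [h]
        · simp [h, Ne.symm h]
      have e2 : ∑ μ, (if i = i ∧ i = ei μ then W (ej μ) (ei μ) else 0)
          = ∑ μ ∈ Finset.univ.filter (fun μ => ei μ = i), W (ej μ) (ei μ) := by
        rw [Finset.sum_filter]
        refine Finset.sum_congr rfl fun μ _ => ?_
        rcases eq_or_ne (ei μ) i with h | h
        · simp [h]
        · simp [h, Ne.symm h]
      rw [hsplit, Finset.sum_eq_zero (fun μ _ => if_neg (h1 μ)),
        Finset.sum_eq_zero (fun μ _ => if_neg (h2 μ)), e1, e2, hH3 i]
      ring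
    · by_cases hA : ∃ ν, i = ei ν ∧ j = ej ν
      · obtain ⟨ν, h1, h2⟩ := hA
        subst h1; subst h2
        rw [hH1 ν, Finset.sum_eq_single ν]
        · simp [hij ν, (hij ν).symm]
        · intro μ _ hμν
          have hA1 : ¬(ei ν = ei μ ∧ ej ν = ej μ) := by
            rintro ⟨g1, g2⟩
            exact hdist μ ν hμν (by rw [g1, g2])
          have hA2 : ¬(ei ν = ej μ ∧ ej ν = ei μ) := by
            rintro ⟨g1, g2⟩
            refine hdist μ ν hμν ?_
            rw [← g1, ← g2, Finset.pair_comm]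
          simp [hA1, hA2, hij ν]
        · simp
      · by_cases hB : ∃ ν, i = ej ν ∧ j = ei ν
        · obtain ⟨ν, h1, h2⟩ := hB
          subst h1; subst h2
          rw [hH2 ν, Finset.sum_eq_single ν]
          · simp [hij ν, (hij ν).symm]
          · intro μ _ hμν
            have hA1 : ¬(ej ν = ei μ ∧ ei ν = ej μ) := by
              rintro ⟨g1, g2⟩
              refine hdist μ ν hμν ?_
              rw [← g1, ← g2, Finset.pair_comm]
            have hA2 : ¬(ej ν = ej μ ∧ ei ν = ei μ) := by
              rintro ⟨g1, g2⟩
              exact hdist μ ν hμν (by rw [g1, g2])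
            simp [hA1, hA2, (hij ν).symm]
          · simp
        · push_neg at hA hB
          have hcond : ∀ μ, ¬(i = ei μ ∧ j = ej μ) ∧ ¬(i = ej μ ∧ j = ei μ) :=
            fun μ => ⟨fun h => (hA μ h.1) h.2, fun h => (hB μ h.1) h.2⟩
          rw [hH4 i j hd hcond, Finset.sum_eq_zero]
          · ring
          · intro μ _
            simp [hd, (hcond μ).1, (hcond μ).2]
  -- column sums (second goal)
  have hsum : ∀ j, ∑ i, (Matrix.diagonal p * (M Q)ᵀ * (Matrix.diagonal p)⁻¹) i j = 0 := by
    intro j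
    rw [heq]
    have hrw : ∀ i, ((W - Whid) + Matrix.diagonal p * Whidᵀ * (Matrix.diagonal p)⁻¹) i j
        = (W i j - Whid i j) + p i * Whid j i * (p j)⁻¹ := by
      intro i
      rw [Matrix.add_apply, Matrix.sub_apply, hE]
    rw [Finset.sum_congr rfl fun i _ => hrw i, Finset.sum_add_distrib]
    have hz1 : ∑ i, (W i j - Whid i j) = 0 := by
      rw [Finset.sum_congr rfl fun i _ => hdecomp i j, Finset.sum_comm]
      apply Finset.sum_eq_zero
      intro μ _
      simp only [ite_and, Finset.sum_sub_distrib, Finset.sum_add_distrib,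
        Finset.sum_ite_eq', Finset.mem_univ, if_true]
      ring
    have hz2 : ∑ i, p i * Whid j i * (p j)⁻¹ = 0 := by
      have h3 : ∑ x, Whid j x * p x = 0 := by
        have h4 := congrFun hp3 j
        rwa [Matrix.mulVec, dotProduct, Pi.zero_apply] at h4
      have h5 : ∑ i, p i * Whid j i * (p j)⁻¹ = (∑ x, Whid j x * p x) * (p j)⁻¹ := by
        rw [Finset.sum_mul]
        exact Finset.sum_congr rfl fun i _ => by ring
      rw [h5, h3, zero_mul]
    rw [hz1, hz2, add_zero]
  exact ⟨hnonneg, hsum, heq⟩
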